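/- Let Φ be an m×N matrix with unit-norm columns, mutual coherence μ and mean square coherence μ̄². Let 0 < a < 1, β > 0, 0 < ε < 1, and suppose k < N/2 - 1, μ⁴ ≤ (1-a)²β²/(32 k (log(2N/ε))³), and k μ̄² ≤ aβ/log(2N/ε). Then for a uniformly random k-subset I ⊆ [N], P(max_{i∉I} ‖Φ_Iᵀ φ_i‖₂² ≥ β/log(2N/ε)) ≤ ε. -/

import Mathlib

open scoped Classical


open Finset

variable {ι : Type*} [DecidableEq ι]

noncomputable def esum (y : ι → ℝ) (t : Finset ι) (r : ℕ) : ℝ :=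
  ∑ J ∈ t.powersetCard r, ∏ l ∈ J, y l

lemma esum_zero (y : ι → ℝ) (t : Finset ι) : esum y t 0 = 1 := by
  simp [esum]

lemma esum_nonneg {y : ι → ℝ} {t : Finset ι} (hy : ∀ l ∈ t, 0 ≤ y l) (r : ℕ) :
    0 ≤ esum y t r := by
  refine Finset.sum_nonneg fun J hJ => Finset.prod_nonneg fun l hl => ?_
  exact hy l ((Finset.mem_powersetCard.mp hJ).1 hl)

lemma esum_insert {y : ι → ℝ} {t : Finset ι} {a : ι} (ha : a ∉ t) (r : ℕ) :
    esum y (insert a t) (r + 1) = esum y t (r + 1) + y a * esum y t r := by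
  unfold esum
  rw [Finset.powersetCard_succ_insert ha, Finset.sum_union, Finset.sum_image]
  · congr 1
    rw [Finset.mul_sum]
    refine Finset.sum_congr rfl fun J hJ => ?_
    have haJ : a ∉ J := fun h => ha ((Finset.mem_powersetCard.mp hJ).1 h)
    rw [Finset.prod_insert haJ]
  · intro J hJ J' hJ' h
    have haJ : a ∉ J := fun h' => ha ((Finset.mem_powersetCard.mp hJ).1 h')
    have haJ' : a ∉ J' := fun h' => ha ((Finset.mem_powersetCard.mp hJ').1 h')
    have := congrArg (Finset.erase · a) h
    simpa [Finset.erase_insert_of_ne, haJ, haJ'] using this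
  · rw [Finset.disjoint_right]
    intro J hJ hJ'
    obtain ⟨K, hK, rfl⟩ := Finset.mem_image.mp hJ
    exact ha ((Finset.mem_powersetCard.mp hJ').1 (Finset.mem_insert_self a K))

lemma esum_erase {y : ι → ℝ} {s : Finset ι} {l : ι} (hl : l ∈ s) (r : ℕ) :
    esum y s (r + 1) = esum y (s.erase l) (r + 1) + y l * esum y (s.erase l) r := by
  have := esum_insert (y := y) (t := s.erase l) (a := l) (Finset.notMem_erase l s) r
  rwa [Finset.insert_erase hl] at this

lemma filter_not_mem_powersetCard (s : Finset ι) (l : ι) (r : ℕ) :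
    (s.powersetCard r).filter (fun J => l ∉ J) = (s.erase l).powersetCard r := by
  ext J
  simp only [Finset.mem_filter, Finset.mem_powersetCard, Finset.subset_erase]
  tauto

/-- weighted identity -/
lemma esum_weighted (y w : ι → ℝ) (s : Finset ι) (r : ℕ) :
    ∑ J ∈ s.powersetCard (r + 1), (∑ l ∈ J, w l) * ∏ l ∈ J, y l
      = ∑ l ∈ s, w l * (y l * esum y (s.erase l) r) := by
  have key : ∀ J ∈ s.powersetCard (r + 1),
      (∑ l ∈ J, w l) * ∏ l' ∈ J, y l'
        = ∑ l ∈ s, (if l ∈ J then w l * ∏ l' ∈ J, y l' else 0) := by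
    intro J hJ
    have hJs : J ⊆ s := (Finset.mem_powersetCard.mp hJ).1
    rw [Finset.sum_ite_mem, Finset.inter_comm, (Finset.inter_eq_left).mpr hJs,
      Finset.sum_mul]
  rw [Finset.sum_congr rfl key, Finset.sum_comm]
  refine Finset.sum_congr rfl fun l hl => ?_
  rw [Finset.sum_ite, Finset.sum_const_zero, add_zero]
  -- ∑ J in filter (l ∈ ·), w l * ∏ = w l * ∑_{J ∋ l} ∏
  have : ∑ J ∈ (s.powersetCard (r+1)).filter (fun J => l ∈ J), w l * ∏ l' ∈ J, y l'
      = w l * ∑ J ∈ (s.powersetCard (r+1)).filter (fun J => l ∈ J), ∏ l' ∈ J, y l' := by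
    rw [Finset.mul_sum]
  rw [this]
  congr 1
  -- ∑_{J ∋ l} ∏ = y l * esum (erase l) r
  have hsplit : esum y s (r+1)
      = ∑ J ∈ (s.powersetCard (r+1)).filter (fun J => l ∈ J), ∏ l' ∈ J, y l'
        + esum y (s.erase l) (r+1) := by
    unfold esum
    rw [← filter_not_mem_powersetCard s l (r+1)]
    exact (Finset.sum_filter_add_sum_filter_not _ _ _).symm
  have h2 := esum_erase (y := y) hl r
  linarith [hsplit, h2]

lemma esum_one (y : ι → ℝ) (s : Finset ι) : esum y s 1 = ∑ l ∈ s, y l := by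
  unfold esum
  rw [Finset.powersetCard_one, Finset.sum_map]
  simp

lemma esum_card_mul (y : ι → ℝ) (s : Finset ι) (r : ℕ) :
    ((r : ℝ) + 1) * esum y s (r + 1) = ∑ l ∈ s, y l * esum y (s.erase l) r := by
  have h := esum_weighted y (fun _ => (1 : ℝ)) s r
  simp only [one_mul] at h
  rw [← h]
  unfold esum
  rw [Finset.mul_sum]
  refine Finset.sum_congr rfl fun J hJ => ?_
  have : (∑ _l ∈ J, (1:ℝ)) = (J.card : ℝ) := by simp
  rw [this, (Finset.mem_powersetCard.mp hJ).2]
  push_cast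
  ring

lemma mono_g {y : ι → ℝ} {s : Finset ι} (hy : ∀ l ∈ s, 0 ≤ y l) (r : ℕ) :
    MonovaryOn y (fun l => y l * esum y (s.erase l) r) ↑s := by
  have key : ∀ i ∈ s, ∀ j ∈ s, i ≠ j → y j ≤ y i →
      y j * esum y (s.erase j) r ≤ y i * esum y (s.erase i) r := by
    intro i hi j hj hij hle
    cases r with
    | zero => simpa [esum_zero] using hle
    | succ r' =>
      have hj' : j ∈ s.erase i := Finset.mem_erase.mpr ⟨fun h => hij h.symm, hj⟩
      have hi' : i ∈ s.erase j := Finset.mem_erase.mpr ⟨hij, hi⟩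
      have e1 := esum_erase (y := y) hj' r'
      have e2 := esum_erase (y := y) hi' r'
      rw [Finset.erase_right_comm (a := j) (b := i)] at e2
      set z := (s.erase i).erase j with hz
      have hzs : ∀ l ∈ z, 0 ≤ y l := fun l hl =>
        hy l (Finset.mem_of_mem_erase (Finset.mem_of_mem_erase hl))
      have hA : 0 ≤ esum y z (r' + 1) := esum_nonneg hzs _
      have hB : 0 ≤ esum y z r' := esum_nonneg hzs _
      rw [e1, e2]
      nlinarith [hy i hi, hy j hj]
  intro i hi j hj hlt
  by_contra hcon
  push_neg at hcon
  have hij : i ≠ j := by rintro rfl; exact lt_irrefl _ hlt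
  exact absurd hlt (not_lt.mpr (key i hi j hj hij hcon.le))

lemma esum_step {y : ι → ℝ} {s : Finset ι} (hy : ∀ l ∈ s, 0 ≤ y l) (m : ℕ) :
    (s.card : ℝ) * (((m : ℝ) + 1) * esum y s (m + 1))
      ≤ ((s.card : ℝ) - m) * ((∑ l ∈ s, y l) * esum y s m) := by
  cases m with
  | zero =>
    simp [esum_zero, esum_one]
  | succ r =>
    set n := (s.card : ℝ)
    set E1 := ∑ l ∈ s, y l with hE1
    -- (m+1) e_{m+1} = E1 * e_m - T
    have hcm := esum_card_mul y s (r + 1)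
    have hrw : ∀ l ∈ s, y l * esum y (s.erase l) (r + 1)
        = y l * esum y s (r + 1) - y l * (y l * esum y (s.erase l) r) := by
      intro l hl
      have h := esum_erase (y := y) hl r
      linear_combination (-(y l)) * h
    rw [Finset.sum_congr rfl hrw, Finset.sum_sub_distrib, ← Finset.sum_mul] at hcm
    -- Chebyshev
    have hmono := mono_g hy r (s := s)
    have hcheb := hmono.sum_mul_sum_le_card_mul_sum
    have hg : ∑ l ∈ s, y l * esum y (s.erase l) r = ((r : ℝ) + 1) * esum y s (r + 1) :=
      (esum_card_mul y s r).symm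
    rw [hg] at hcheb
    -- hcheb : E1 * ((r+1) * e_{r+1}) ≤ n * ∑ y l * (y l * esum (erase l) r)
    have hT : ∑ l ∈ s, y l * (y l * esum y (s.erase l) r) ≥ 0 := by
      refine Finset.sum_nonneg fun l hl => ?_
      have := esum_nonneg (y := y) (t := s.erase l)
        (fun x hx => hy x (Finset.mem_of_mem_erase hx)) r
      have := hy l hl
      positivity
    push_cast at hcm hcheb ⊢
    have h5 : n * (((r:ℝ) + 1 + 1) * esum y s (r + 1 + 1))
        = n * (E1 * esum y s (r + 1))
          - n * (∑ x ∈ s, y x * (y x * esum y (s.erase x) r)) := by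
      rw [hcm]; ring
    linarith [hcheb, h5]

lemma maclaurin {y : ι → ℝ} {s : Finset ι} (hy : ∀ l ∈ s, 0 ≤ y l) (m : ℕ)
    (hm : m ≤ s.card) :
    ((s.card : ℝ)) ^ m * esum y s m ≤ (s.card.choose m : ℝ) * (∑ l ∈ s, y l) ^ m := by
  induction m with
  | zero => simp [esum_zero]
  | succ r ih =>
    have hr : r ≤ s.card := Nat.le_of_succ_le hm
    have ihr := ih hr
    set n := (s.card : ℝ) with hn
    set E1 := ∑ l ∈ s, y l with hE1
    have hE1nn : 0 ≤ E1 := Finset.sum_nonneg hy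
    have hkey := esum_step hy r
    have hnm : (0:ℝ) ≤ n - r := by
      have h6 : (r:ℝ) ≤ n := by rw [hn]; exact_mod_cast hr
      linarith
    have hchoose : ((s.card.choose (r+1) : ℝ)) * ((r:ℝ)+1) = (s.card.choose r : ℝ) * (n - r) := by
      have := Nat.choose_succ_right_eq s.card r
      have hcast : ((s.card.choose (r+1) * (r+1) : ℕ) : ℝ) = ((s.card.choose r * (s.card - r) : ℕ) : ℝ) := by
        exact_mod_cast congrArg (Nat.cast (R := ℝ)) this
      push_cast [Nat.cast_sub hr] at hcast
      push_cast
      linarith [hcast]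
    have hnpow : (0:ℝ) ≤ n ^ r := by positivity
    -- n^{r+1} (r+1) e_{r+1} ≤ (n-r) E1 * (n^r e_r) ≤ (n-r) E1 * C(n,r) E1^r
    have step1 : n ^ (r+1) * (((r:ℝ)+1) * esum y s (r+1))
        ≤ (n - r) * E1 * (n ^ r * esum y s r) := by
      have := mul_le_mul_of_nonneg_left hkey hnpow
      calc n ^ (r+1) * (((r:ℝ)+1) * esum y s (r+1))
          = n ^ r * (n * (((r:ℝ)+1) * esum y s (r+1))) := by ring
        _ ≤ n ^ r * ((n - r) * (E1 * esum y s r)) := this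
        _ = (n - r) * E1 * (n ^ r * esum y s r) := by ring
    have step2 : (n - r) * E1 * (n ^ r * esum y s r)
        ≤ (n - r) * E1 * ((s.card.choose r : ℝ) * E1 ^ r) := by
      exact mul_le_mul_of_nonneg_left ihr (by positivity)
    have step3 : (n - r) * E1 * ((s.card.choose r : ℝ) * E1 ^ r)
        = ((s.card.choose (r+1) : ℝ)) * ((r:ℝ)+1) * E1 ^ (r+1) := by
      rw [hchoose]; ring
    have hfin : n ^ (r+1) * (((r:ℝ)+1) * esum y s (r+1))
        ≤ ((s.card.choose (r+1) : ℝ)) * ((r:ℝ)+1) * E1 ^ (r+1) := by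
      calc _ ≤ _ := step1
        _ ≤ _ := step2
        _ = _ := step3
    have hr1 : (0:ℝ) < (r:ℝ) + 1 := by positivity
    nlinarith [hfin]

open scoped Classical

lemma exp_le_one_add_mul (u : ℝ) : Real.exp u ≤ 1 + u * Real.exp u := by
  have h := Real.add_one_le_exp (-u)
  have hpos := Real.exp_pos u
  have hme : Real.exp (-u) * Real.exp u = 1 := by
    rw [← Real.exp_add]; simp
  nlinarith

lemma chernoff_count {ι : Type*} [DecidableEq ι] (s : Finset ι) (x : ι → ℝ) (k : ℕ)
    (hk : k ≤ s.card) (hn : 0 < s.card)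
    (τ lam M B : ℝ) (hlam : 0 ≤ lam) (hB : 0 ≤ B)
    (hx0 : ∀ l ∈ s, 0 ≤ x l) (hxM : ∀ l ∈ s, x l ≤ M)
    (hmean : lam * Real.exp (lam * M) * (∑ l ∈ s, x l) ≤ (s.card : ℝ) * B) :
    (((s.powersetCard k).filter (fun I => τ ≤ ∑ l ∈ I, x l)).card : ℝ)
      ≤ (s.card.choose k : ℝ) * Real.exp ((k : ℝ) * B - lam * τ) := by
  set y : ι → ℝ := fun l => Real.exp (lam * x l) with hy
  have hy0 : ∀ l ∈ s, 0 ≤ y l := fun l _ => (Real.exp_pos _).le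
  -- step 1 : count ≤ exp(-lam τ) * esum y s k
  have h1 : (((s.powersetCard k).filter (fun I => τ ≤ ∑ l ∈ I, x l)).card : ℝ)
      ≤ ∑ I ∈ s.powersetCard k, Real.exp (lam * ((∑ l ∈ I, x l) - τ)) := by
    rw [Finset.card_eq_sum_ones]
    push_cast
    calc (∑ _I ∈ (s.powersetCard k).filter (fun I => τ ≤ ∑ l ∈ I, x l), (1:ℝ))
        ≤ ∑ I ∈ (s.powersetCard k).filter (fun I => τ ≤ ∑ l ∈ I, x l),
            Real.exp (lam * ((∑ l ∈ I, x l) - τ)) := by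
          refine Finset.sum_le_sum fun I hI => ?_
          have hge := (Finset.mem_filter.mp hI).2
          exact Real.one_le_exp (mul_nonneg hlam (sub_nonneg.mpr hge))
      _ ≤ ∑ I ∈ s.powersetCard k, Real.exp (lam * ((∑ l ∈ I, x l) - τ)) :=
          Finset.sum_le_sum_of_subset_of_nonneg (Finset.filter_subset _ _)
            (fun I _ _ => (Real.exp_pos _).le)
  have h2 : ∑ I ∈ s.powersetCard k, Real.exp (lam * ((∑ l ∈ I, x l) - τ))
      = Real.exp (-(lam * τ)) * esum y s k := by
    unfold esum
    rw [Finset.mul_sum]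
    refine Finset.sum_congr rfl fun I _ => ?_
    rw [mul_sub, sub_eq_add_neg, add_comm, Real.exp_add, Finset.mul_sum, Real.exp_sum]
  -- step 2 : Maclaurin
  have hmac := maclaurin hy0 k hk
  have hE1 : ∑ l ∈ s, y l ≤ (s.card : ℝ) * (1 + B) := by
    have hper : ∀ l ∈ s, y l ≤ 1 + lam * x l * Real.exp (lam * M) := by
      intro l hl
      have h3 := exp_le_one_add_mul (lam * x l)
      have h4 : lam * x l * Real.exp (lam * x l) ≤ lam * x l * Real.exp (lam * M) := by
        have : Real.exp (lam * x l) ≤ Real.exp (lam * M) :=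
          Real.exp_le_exp.mpr (mul_le_mul_of_nonneg_left (hxM l hl) hlam)
        exact mul_le_mul_of_nonneg_left this (mul_nonneg hlam (hx0 l hl))
      simp only [hy]
      linarith
    calc ∑ l ∈ s, y l ≤ ∑ l ∈ s, (1 + lam * x l * Real.exp (lam * M)) :=
          Finset.sum_le_sum hper
      _ = (s.card : ℝ) + lam * Real.exp (lam * M) * (∑ l ∈ s, x l) := by
          rw [Finset.sum_add_distrib, Finset.sum_const, nsmul_eq_mul, mul_one,
            Finset.mul_sum]
          congr 1
          exact Finset.sum_congr rfl fun l _ => by ring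
      _ ≤ (s.card : ℝ) + (s.card : ℝ) * B := by linarith
      _ = (s.card : ℝ) * (1 + B) := by ring
  have hE1nn : 0 ≤ ∑ l ∈ s, y l := Finset.sum_nonneg hy0
  have hEpow : (∑ l ∈ s, y l) ^ k ≤ ((s.card : ℝ) * (1 + B)) ^ k :=
    pow_le_pow_left₀ hE1nn hE1 k
  have hesum : esum y s k ≤ (s.card.choose k : ℝ) * (1 + B) ^ k := by
    have hnpos : (0:ℝ) < (s.card : ℝ) ^ k := by positivity
    have hchain : (s.card : ℝ) ^ k * esum y s k
        ≤ (s.card : ℝ) ^ k * ((s.card.choose k : ℝ) * (1 + B) ^ k) := by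
      calc (s.card : ℝ) ^ k * esum y s k
          ≤ (s.card.choose k : ℝ) * (∑ l ∈ s, y l) ^ k := hmac
        _ ≤ (s.card.choose k : ℝ) * ((s.card : ℝ) * (1 + B)) ^ k := by
            exact mul_le_mul_of_nonneg_left hEpow (by positivity)
        _ = (s.card : ℝ) ^ k * ((s.card.choose k : ℝ) * (1 + B) ^ k) := by
            rw [mul_pow]; ring
    exact le_of_mul_le_mul_left hchain hnpos
  have hBexp : (1 + B) ^ k ≤ Real.exp ((k : ℝ) * B) := by
    have h5 : (1 + B) ≤ Real.exp B := by
      have := Real.add_one_le_exp B; linarith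
    calc (1 + B) ^ k ≤ (Real.exp B) ^ k := pow_le_pow_left₀ (by linarith) h5 k
      _ = Real.exp ((k : ℝ) * B) := by rw [← Real.exp_nat_mul]
  calc (((s.powersetCard k).filter (fun I => τ ≤ ∑ l ∈ I, x l)).card : ℝ)
      ≤ Real.exp (-(lam * τ)) * esum y s k := by rw [← h2]; exact h1
    _ ≤ Real.exp (-(lam * τ)) * ((s.card.choose k : ℝ) * Real.exp ((k : ℝ) * B)) := by
        refine mul_le_mul_of_nonneg_left ?_ (Real.exp_pos _).le
        calc esum y s k ≤ (s.card.choose k : ℝ) * (1 + B) ^ k := hesum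
          _ ≤ (s.card.choose k : ℝ) * Real.exp ((k : ℝ) * B) :=
              mul_le_mul_of_nonneg_left hBexp (by positivity)
    _ = (s.card.choose k : ℝ) * Real.exp ((k : ℝ) * B - lam * τ) := by
        rw [sub_eq_add_neg, Real.exp_add]; ring

set_option maxHeartbeats 1000000 in
/-- SINC theorem: if the mutual coherence `μ` and mean square coherence `μ̄²` of an
`m × N` unit-norm-column matrix satisfy `μ⁴ ≤ (1-a)²β²/(32k(log(2N/ε))³)` and
`k μ̄² ≤ aβ/log(2N/ε)`, then for a uniformly random `k`-subset `I`,
`P(max_{i ∉ I} ‖Φ_Iᵀ φ_i‖₂² ≥ β/log(2N/ε)) ≤ ε`.  Probability is expressed by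
counting `k`-subsets. -/
theorem stmt_12 (m N k : ℕ) (hk : 2 * k + 2 < N)
    (φ : Fin N → Fin m → ℝ) (hcol : ∀ i, ∑ t, φ i t ^ 2 = 1)
    (μc μbarsq a β ε : ℝ)
    (hμ_ub : ∀ i l : Fin N, i ≠ l → |∑ t, φ i t * φ l t| ≤ μc)
    (hμ2_ub : ∀ j : Fin N,
      (1 / ((N : ℝ) - 1)) * ∑ i ∈ Finset.univ.erase j, (∑ t, φ i t * φ j t) ^ 2 ≤ μbarsq)
    (ha0 : 0 < a) (ha1 : a < 1) (hβ : 0 < β) (hε0 : 0 < ε) (hε1 : ε < 1)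
    (h1 : μc ^ 4 ≤ (1 - a) ^ 2 * β ^ 2 / (32 * k * (Real.log (2 * N / ε)) ^ 3))
    (h2 : (k : ℝ) * μbarsq ≤ a * β / Real.log (2 * N / ε)) :
    ((((Finset.univ : Finset (Fin N)).powersetCard k).filter
        (fun I => ∃ i ∉ I,
          β / Real.log (2 * N / ε) ≤ ∑ l ∈ I, (∑ t, φ l t * φ i t) ^ 2)).card : ℝ)
      ≤ ε * (((Finset.univ : Finset (Fin N)).powersetCard k).card : ℝ) := by
  have hN3 : 3 ≤ N := by omega
  have hNR : (3:ℝ) ≤ (N:ℝ) := by exact_mod_cast hN3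
  have hratio : (1:ℝ) < 2 * N / ε := by
    rw [lt_div_iff₀ hε0]
    nlinarith
  have hratio0 : (0:ℝ) < 2 * N / ε := by linarith
  set L := Real.log (2 * N / ε) with hLdef
  have hL : 0 < L := Real.log_pos hratio
  set τ := β / L with hτdef
  have hτ : 0 < τ := div_pos hβ hL
  have hβτ : β = τ * L := by rw [hτdef, div_mul_cancel₀ β hL.ne']
  -- the event condition uses τ
  have hPcard : (((Finset.univ : Finset (Fin N)).powersetCard k).card : ℝ)
      = (N.choose k : ℝ) := by
    rw [Finset.card_powersetCard, Finset.card_univ, Fintype.card_fin]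
  -- dispatch k = 0
  rcases Nat.eq_zero_or_pos k with hk0 | hkpos
  · subst hk0
    have hempty : ((Finset.univ : Finset (Fin N)).powersetCard 0).filter
        (fun I => ∃ i ∉ I, τ ≤ ∑ l ∈ I, (∑ t, φ l t * φ i t) ^ 2) = ∅ := by
      refine Finset.filter_false_of_mem fun I hI => ?_
      rw [Finset.powersetCard_zero, Finset.mem_singleton] at hI
      subst hI
      rintro ⟨i, -, hge⟩
      simp only [Finset.sum_empty] at hge
      linarith
    rw [hempty]
    simp only [Finset.card_empty, Nat.cast_zero]
    have := Finset.card_powersetCard 0 (Finset.univ : Finset (Fin N))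
    exact mul_nonneg hε0.le (Nat.cast_nonneg _)
  -- abbreviations
  set x : Fin N → Fin N → ℝ := fun i l => (∑ t, φ l t * φ i t) ^ 2 with hxdef
  set M := μc ^ 2 with hMdef
  have hx0 : ∀ i l, 0 ≤ x i l := fun i l => sq_nonneg _
  have hxM : ∀ i l : Fin N, l ≠ i → x i l ≤ M := by
    intro i l hne
    have hcomm : (∑ t, φ l t * φ i t) = ∑ t, φ i t * φ l t :=
      Finset.sum_congr rfl fun t _ => mul_comm _ _
    have habs := hμ_ub i l (fun h => hne h.symm)
    calc x i l = |∑ t, φ l t * φ i t| ^ 2 := (sq_abs _).symm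
      _ ≤ μc ^ 2 := by
          rw [hcomm]
          exact pow_le_pow_left₀ (abs_nonneg _) habs 2
  have hN1R : (0:ℝ) < (N:ℝ) - 1 := by linarith
  have hSx : ∀ i : Fin N, ∑ l ∈ Finset.univ.erase i, x i l ≤ ((N:ℝ) - 1) * μbarsq := by
    intro i
    have h := hμ2_ub i
    have h' := mul_le_mul_of_nonneg_left h hN1R.le
    calc ∑ l ∈ Finset.univ.erase i, x i l
        = ((N:ℝ) - 1) * ((1 / ((N : ℝ) - 1)) *
            ∑ l ∈ Finset.univ.erase i, (∑ t, φ l t * φ i t) ^ 2) := by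
          field_simp
          rfl
      _ ≤ ((N:ℝ) - 1) * μbarsq := h'
  have hμb0 : 0 ≤ μbarsq := by
    have h := hμ2_ub ⟨0, by omega⟩
    have hs : 0 ≤ ∑ i ∈ Finset.univ.erase (⟨0, by omega⟩ : Fin N),
        (∑ t, φ i t * φ (⟨0, by omega⟩ : Fin N) t) ^ 2 :=
      Finset.sum_nonneg fun l _ => sq_nonneg _
    have : 0 ≤ (1 / ((N : ℝ) - 1)) * ∑ i ∈ Finset.univ.erase (⟨0, by omega⟩ : Fin N),
        (∑ t, φ i t * φ (⟨0, by omega⟩ : Fin N) t) ^ 2 := by positivity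
    linarith
  -- dispatch the case k*M < τ (event empty)
  rcases lt_or_ge ((k:ℝ) * M) τ with hkM | hkM
  · have hempty : (((Finset.univ : Finset (Fin N)).powersetCard k).filter
        (fun I => ∃ i ∉ I, τ ≤ ∑ l ∈ I, (∑ t, φ l t * φ i t) ^ 2)) = ∅ := by
      refine Finset.filter_false_of_mem fun I hI => ?_
      rintro ⟨i, hiI, hge⟩
      have hIcard : I.card = k := (Finset.mem_powersetCard.mp hI).2
      have hsum : ∑ l ∈ I, (∑ t, φ l t * φ i t) ^ 2 ≤ (k:ℝ) * M := by
        calc ∑ l ∈ I, (∑ t, φ l t * φ i t) ^ 2 ≤ ∑ _l ∈ I, M := by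
              refine Finset.sum_le_sum fun l hl => ?_
              exact hxM i l (fun h => hiI (h ▸ hl))
          _ = (k:ℝ) * M := by rw [Finset.sum_const, nsmul_eq_mul, hIcard]
      linarith
    rw [hempty]
    simp only [Finset.card_empty, Nat.cast_zero]
    have h0 : (0:ℝ) ≤ (((Finset.univ : Finset (Fin N)).powersetCard k).card : ℝ) := by
      exact Nat.cast_nonneg _
    exact mul_nonneg hε0.le h0
  -- main case
  have hM0 : 0 < M := by
    rcases le_or_gt M 0 with h | h
    · exfalso
      have : (k:ℝ) * M ≤ 0 := mul_nonpos_of_nonneg_of_nonpos (by positivity) h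
      linarith
    · exact h
  have hμcnn : 0 ≤ μc := by
    have hne : (⟨0, by omega⟩ : Fin N) ≠ (⟨1, by omega⟩ : Fin N) := by
      intro h
      simpa using congrArg Fin.val h
    exact le_trans (abs_nonneg _) (hμ_ub _ _ hne)
  have hμc0 : 0 < μc := by
    rcases eq_or_lt_of_le hμcnn with h | h
    · exfalso
      rw [hMdef, ← h] at hM0
      simp at hM0
    · exact h
  set lam := (1 - a) / (4 * M) with hlamdef
  have hlam : 0 < lam := div_pos (by linarith) (by linarith)
  have hMne : M ≠ 0 := hM0.ne'
  have hlamM : lam * M = (1 - a) / 4 := by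
    rw [hlamdef]
    field_simp
  have hexpbound : Real.exp (lam * M) ≤ 4 / (3 + a) := by
    rw [hlamM]
    have h3 := Real.add_one_le_exp (-((1 - a) / 4))
    have h4 := Real.exp_pos ((1 - a) / 4)
    have h5 : Real.exp (-((1 - a) / 4)) * Real.exp ((1 - a) / 4) = 1 := by
      rw [← Real.exp_add]; simp
    rw [le_div_iff₀ (by linarith : (0:ℝ) < 3 + a)]
    nlinarith
  -- the key exponent bound : 4 * L ≤ lam * τ * (1-a)/2
  have hkR : (1:ℝ) ≤ (k:ℝ) := by exact_mod_cast hkpos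
  have hdenpos : (0:ℝ) < 32 * k * L ^ 3 := by positivity
  have h1' : μc ^ 4 * (32 * k * L ^ 3) ≤ (1 - a) ^ 2 * β ^ 2 :=
    (le_div_iff₀ hdenpos).mp h1
  have hM2 : M ^ 2 = μc ^ 4 := by rw [hMdef]; ring
  have hkeysq : 32 * (k:ℝ) * L * M ^ 2 ≤ (1 - a) ^ 2 * τ ^ 2 := by
    have hβ2 : β ^ 2 = τ ^ 2 * L ^ 2 := by rw [hβτ]; ring
    have hL2 : (0:ℝ) < L ^ 2 := by positivity
    have hXY : (32 * (k:ℝ) * L * M ^ 2) * L ^ 2 ≤ ((1 - a) ^ 2 * τ ^ 2) * L ^ 2 := by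
      calc (32 * (k:ℝ) * L * M ^ 2) * L ^ 2 = μc ^ 4 * (32 * k * L ^ 3) := by
            rw [← hM2]; ring
        _ ≤ (1 - a) ^ 2 * β ^ 2 := h1'
        _ = ((1 - a) ^ 2 * τ ^ 2) * L ^ 2 := by rw [hβ2]; ring
    exact le_of_mul_le_mul_right hXY hL2
  have hkey : 32 * L * M ≤ (1 - a) ^ 2 * τ := by
    -- (1-a)^2 τ^2 ≥ 32 k L M^2 ≥ 32 L M (k M) ≥ 32 L M τ
    have hstep : 32 * L * M * τ ≤ (1 - a) ^ 2 * τ ^ 2 := by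
      have h6 : 32 * L * M * τ ≤ 32 * L * M * ((k:ℝ) * M) := by
        have : (0:ℝ) ≤ 32 * L * M := by positivity
        exact mul_le_mul_of_nonneg_left hkM this
      have h7 : 32 * L * M * ((k:ℝ) * M) = 32 * (k:ℝ) * L * M ^ 2 := by ring
      linarith
    have h8 : (32 * L * M) * τ ≤ ((1 - a) ^ 2 * τ) * τ := by
      calc (32 * L * M) * τ = 32 * L * M * τ := by ring
        _ ≤ (1 - a) ^ 2 * τ ^ 2 := hstep
        _ = ((1 - a) ^ 2 * τ) * τ := by ring
    exact le_of_mul_le_mul_right h8 hτ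
  have hexpo : 4 * L ≤ lam * τ * (1 - a) / 2 := by
    have : lam * τ * (1 - a) / 2 = (1 - a) ^ 2 * τ / (8 * M) := by
      rw [hlamdef]; field_simp; ring
    rw [this, le_div_iff₀ (by linarith : (0:ℝ) < 8 * M)]
    linarith
  -- per-index Chernoff bound
  set Bp := lam * Real.exp (lam * M) * μbarsq with hBpdef
  have hBp0 : 0 ≤ Bp := by
    have := Real.exp_pos (lam * M)
    rw [hBpdef]; positivity
  have hNk : k ≤ N - 1 := by omega
  have hcount : ∀ i : Fin N,
      ((((Finset.univ : Finset (Fin N)).powersetCard k).filter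
          (fun I => i ∉ I ∧ τ ≤ ∑ l ∈ I, x i l)).card : ℝ)
        ≤ ((N - 1).choose k : ℝ) * Real.exp ((k:ℝ) * Bp - lam * τ) := by
    intro i
    have hcarderase : (Finset.univ.erase i).card = N - 1 := by
      rw [Finset.card_erase_of_mem (Finset.mem_univ i), Finset.card_univ, Fintype.card_fin]
    have hsetseq : (((Finset.univ : Finset (Fin N)).powersetCard k).filter
          (fun I => i ∉ I ∧ τ ≤ ∑ l ∈ I, x i l))
        = (((Finset.univ.erase i).powersetCard k).filter
          (fun I => τ ≤ ∑ l ∈ I, x i l)) := by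
      ext I
      simp only [Finset.mem_filter, Finset.mem_powersetCard, Finset.subset_erase]
      constructor
      · rintro ⟨⟨hsub, hcard⟩, hni, hge⟩
        exact ⟨⟨⟨hsub, hni⟩, hcard⟩, hge⟩
      · rintro ⟨⟨⟨hsub, hni⟩, hcard⟩, hge⟩
        exact ⟨⟨hsub, hcard⟩, hni, hge⟩
    rw [hsetseq]
    have hcard' : ((Finset.univ.erase i).card : ℝ) = (N:ℝ) - 1 := by
      rw [hcarderase]
      have : (1:ℕ) ≤ N := by omega
      push_cast [Nat.cast_sub this]
      ring
    have happ := chernoff_count (Finset.univ.erase i) (x i) k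
      (by rw [hcarderase]; exact hNk) (by rw [hcarderase]; omega)
      τ lam M Bp hlam.le hBp0
      (fun l _ => hx0 i l)
      (fun l hl => hxM i l (Finset.ne_of_mem_erase hl))
      ?_
    · rw [hcarderase] at happ
      exact happ
    · rw [hcard']
      rw [hBpdef]
      have hfac : (0:ℝ) ≤ lam * Real.exp (lam * M) := by
        have := Real.exp_pos (lam * M); positivity
      calc lam * Real.exp (lam * M) * (∑ l ∈ Finset.univ.erase i, x i l)
          ≤ lam * Real.exp (lam * M) * (((N:ℝ) - 1) * μbarsq) :=
            mul_le_mul_of_nonneg_left (hSx i) hfac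
        _ = ((N:ℝ) - 1) * (lam * Real.exp (lam * M) * μbarsq) := by ring
  -- exponent estimate
  have hexpest : (k:ℝ) * Bp - lam * τ ≤ -L := by
    have hkBp : (k:ℝ) * Bp ≤ lam * Real.exp (lam * M) * (a * τ) := by
      have hkμb : (k:ℝ) * μbarsq ≤ a * τ := by
        rw [hτdef, ← mul_div_assoc]
        exact h2
      have hfac : (0:ℝ) ≤ lam * Real.exp (lam * M) := by
        have := Real.exp_pos (lam * M); positivity
      calc (k:ℝ) * Bp = lam * Real.exp (lam * M) * ((k:ℝ) * μbarsq) := by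
            rw [hBpdef]; ring
        _ ≤ lam * Real.exp (lam * M) * (a * τ) := mul_le_mul_of_nonneg_left hkμb hfac
    have hstep : lam * Real.exp (lam * M) * (a * τ) ≤ lam * τ * (1 + a) / 2 := by
      have haτ : 0 ≤ a * τ := by positivity
      have h8 : lam * Real.exp (lam * M) * (a * τ) ≤ lam * (4 / (3 + a)) * (a * τ) := by
        have : lam * Real.exp (lam * M) ≤ lam * (4 / (3 + a)) :=
          mul_le_mul_of_nonneg_left hexpbound hlam.le
        exact mul_le_mul_of_nonneg_right this haτ
      have h9 : lam * (4 / (3 + a)) * (a * τ) ≤ lam * τ * (1 + a) / 2 := by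
        have hfrac : 4 * a / (3 + a) ≤ (1 + a) / 2 := by
          rw [div_le_div_iff₀ (by linarith : (0:ℝ) < 3 + a) (by norm_num : (0:ℝ) < 2)]
          nlinarith
        calc lam * (4 / (3 + a)) * (a * τ) = (lam * τ) * (4 * a / (3 + a)) := by ring
          _ ≤ (lam * τ) * ((1 + a) / 2) :=
              mul_le_mul_of_nonneg_left hfrac (by positivity)
          _ = lam * τ * (1 + a) / 2 := by ring
      linarith
    have hfin : (k:ℝ) * Bp - lam * τ ≤ -(lam * τ * (1 - a) / 2) := by
      have : lam * τ * (1 + a) / 2 - lam * τ = -(lam * τ * (1 - a) / 2) := by ring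
      linarith
    linarith
  -- union bound
  have hunion : ((((Finset.univ : Finset (Fin N)).powersetCard k).filter
        (fun I => ∃ i ∉ I, τ ≤ ∑ l ∈ I, (∑ t, φ l t * φ i t) ^ 2)).card : ℝ)
      ≤ ∑ i : Fin N, ((((Finset.univ : Finset (Fin N)).powersetCard k).filter
          (fun I => i ∉ I ∧ τ ≤ ∑ l ∈ I, x i l)).card : ℝ) := by
    have hsub : (((Finset.univ : Finset (Fin N)).powersetCard k).filter
          (fun I => ∃ i ∉ I, τ ≤ ∑ l ∈ I, (∑ t, φ l t * φ i t) ^ 2))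
        ⊆ Finset.univ.biUnion (fun i => ((Finset.univ : Finset (Fin N)).powersetCard k).filter
          (fun I => i ∉ I ∧ τ ≤ ∑ l ∈ I, x i l)) := by
      intro I hI
      obtain ⟨hIP, i, hiI, hge⟩ := Finset.mem_filter.mp hI
      exact Finset.mem_biUnion.mpr ⟨i, Finset.mem_univ i,
        Finset.mem_filter.mpr ⟨hIP, hiI, hge⟩⟩
    have h10 := Finset.card_le_card hsub
    have h11 := Finset.card_biUnion_le (s := (Finset.univ : Finset (Fin N)))
      (t := fun i => ((Finset.univ : Finset (Fin N)).powersetCard k).filter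
        (fun I => i ∉ I ∧ τ ≤ ∑ l ∈ I, x i l))
    have h12 : (((Finset.univ : Finset (Fin N)).powersetCard k).filter
        (fun I => ∃ i ∉ I, τ ≤ ∑ l ∈ I, (∑ t, φ l t * φ i t) ^ 2)).card
        ≤ ∑ i : Fin N, ((((Finset.univ : Finset (Fin N)).powersetCard k).filter
          (fun I => i ∉ I ∧ τ ≤ ∑ l ∈ I, x i l)).card) := le_trans h10 h11
    exact_mod_cast h12
  -- put it together
  have hexpL : Real.exp ((k:ℝ) * Bp - lam * τ) ≤ ε / (2 * N) := by
    have h13 : Real.exp ((k:ℝ) * Bp - lam * τ) ≤ Real.exp (-L) :=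
      Real.exp_le_exp.mpr hexpest
    have h14 : Real.exp (-L) = ε / (2 * N) := by
      rw [Real.exp_neg, hLdef, Real.exp_log hratio0, inv_div]
    linarith
  have hchoose_le : ((N - 1).choose k : ℝ) ≤ (N.choose k : ℝ) := by
    exact_mod_cast Nat.choose_le_choose k (by omega : N - 1 ≤ N)
  have hchoose0 : (0:ℝ) ≤ ((N - 1).choose k : ℝ) := by positivity
  calc ((((Finset.univ : Finset (Fin N)).powersetCard k).filter
        (fun I => ∃ i ∉ I, τ ≤ ∑ l ∈ I, (∑ t, φ l t * φ i t) ^ 2)).card : ℝ)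
      ≤ ∑ i : Fin N, ((((Finset.univ : Finset (Fin N)).powersetCard k).filter
          (fun I => i ∉ I ∧ τ ≤ ∑ l ∈ I, x i l)).card : ℝ) := hunion
    _ ≤ ∑ _i : Fin N, ((N - 1).choose k : ℝ) * Real.exp ((k:ℝ) * Bp - lam * τ) :=
        Finset.sum_le_sum fun i _ => hcount i
    _ = (N:ℝ) * (((N - 1).choose k : ℝ) * Real.exp ((k:ℝ) * Bp - lam * τ)) := by
        rw [Finset.sum_const, Finset.card_univ, Fintype.card_fin, nsmul_eq_mul]
    _ ≤ (N:ℝ) * (((N - 1).choose k : ℝ) * (ε / (2 * N))) := by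
        refine mul_le_mul_of_nonneg_left ?_ (by positivity)
        exact mul_le_mul_of_nonneg_left hexpL hchoose0
    _ = ((N - 1).choose k : ℝ) * ε / 2 := by
        field_simp
    _ ≤ ε * (N.choose k : ℝ) := by
        have ha' : ((N - 1).choose k : ℝ) * ε ≤ (N.choose k : ℝ) * ε :=
          mul_le_mul_of_nonneg_right hchoose_le hε0.le
        have hb' : (0:ℝ) ≤ (N.choose k : ℝ) * ε := by positivity
        linarith
    _ = ε * (((Finset.univ : Finset (Fin N)).powersetCard k).card : ℝ) := by rw [hPcard]
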